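/- For all nonzero rational numbers a, b and every nonzero rational u, the identity ((118441a¹⁸u⁹⁰ + 2¹⁵·11863·a¹²bu⁶⁰ - 2³⁰·137·a⁶b²u³⁰ + 2⁴⁵b³)/(2⁹·29³·a¹⁵u⁷⁵))² + a·(-(9a⁶u³⁰ - 2¹³b)/(58a⁵u²⁴))⁵ - ((7a⁶u³⁰ - 2¹⁵b)/(232a⁵u²⁵))⁶ = b holds. In particular, the surface x² + ay⁵ - z⁶ = b has infinitely many rational points. -/

import Mathlib

/-- For nonzero rationals a, b and every nonzero rational u, the stated explicit
identity holds; in particular x² + ay⁵ - z⁶ = b has infinitely many rational points. -/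
theorem stmt_18 (a b : ℚ) (ha : a ≠ 0) (hb : b ≠ 0) :
    (∀ u : ℚ, u ≠ 0 →
      ((118441 * a ^ 18 * u ^ 90 + 2 ^ 15 * 11863 * a ^ 12 * b * u ^ 60 -
          2 ^ 30 * 137 * a ^ 6 * b ^ 2 * u ^ 30 + 2 ^ 45 * b ^ 3) /
        (2 ^ 9 * 29 ^ 3 * a ^ 15 * u ^ 75)) ^ 2 +
      a * (-(9 * a ^ 6 * u ^ 30 - 2 ^ 13 * b) / (58 * a ^ 5 * u ^ 24)) ^ 5 -
      ((7 * a ^ 6 * u ^ 30 - 2 ^ 15 * b) / (232 * a ^ 5 * u ^ 25)) ^ 6 = b) ∧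
    {P : ℚ × ℚ × ℚ | P.1 ^ 2 + a * P.2.1 ^ 5 - P.2.2 ^ 6 = b}.Infinite := by
  have key : ∀ u : ℚ, u ≠ 0 →
      ((118441 * a ^ 18 * u ^ 90 + 2 ^ 15 * 11863 * a ^ 12 * b * u ^ 60 -
          2 ^ 30 * 137 * a ^ 6 * b ^ 2 * u ^ 30 + 2 ^ 45 * b ^ 3) /
        (2 ^ 9 * 29 ^ 3 * a ^ 15 * u ^ 75)) ^ 2 +
      a * (-(9 * a ^ 6 * u ^ 30 - 2 ^ 13 * b) / (58 * a ^ 5 * u ^ 24)) ^ 5 -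
      ((7 * a ^ 6 * u ^ 30 - 2 ^ 15 * b) / (232 * a ^ 5 * u ^ 25)) ^ 6 = b := by
    intro u hu
    field_simp
    ring
  refine ⟨key, ?_⟩
  -- Z-coordinate of the family
  set Z : ℚ → ℚ := fun u => (7 * a ^ 6 * u ^ 30 - 2 ^ 15 * b) / (232 * a ^ 5 * u ^ 25) with hZdef
  set S : Set (ℚ × ℚ × ℚ) := {P : ℚ × ℚ × ℚ | P.1 ^ 2 + a * P.2.1 ^ 5 - P.2.2 ^ 6 = b} with hS
  have hTsub : Z '' Set.Ioi (0:ℚ) ⊆ (fun P : ℚ × ℚ × ℚ => P.2.2) '' S := by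
    rintro z ⟨u, hu, rfl⟩
    have hu0 : u ≠ 0 := ne_of_gt hu
    exact ⟨(((118441 * a ^ 18 * u ^ 90 + 2 ^ 15 * 11863 * a ^ 12 * b * u ^ 60 -
          2 ^ 30 * 137 * a ^ 6 * b ^ 2 * u ^ 30 + 2 ^ 45 * b ^ 3) /
        (2 ^ 9 * 29 ^ 3 * a ^ 15 * u ^ 75)),
        (-(9 * a ^ 6 * u ^ 30 - 2 ^ 13 * b) / (58 * a ^ 5 * u ^ 24)), Z u), key u hu0, rfl⟩
  have hTinf : (Z '' Set.Ioi (0:ℚ)).Infinite := by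
    intro hfin
    have hIoi : (Set.Ioi (0:ℚ)).Infinite := Set.Ioi_infinite 0
    have hcover : Set.Ioi (0:ℚ) ⊆ ⋃ c ∈ Z '' Set.Ioi (0:ℚ), {u ∈ Set.Ioi (0:ℚ) | Z u = c} := by
      intro u hu
      exact Set.mem_biUnion (Set.mem_image_of_mem Z hu) ⟨hu, rfl⟩
    have hfib : ∀ c ∈ Z '' Set.Ioi (0:ℚ), {u ∈ Set.Ioi (0:ℚ) | Z u = c}.Finite := by
      intro c _
      have hp : (Polynomial.C (7 * a ^ 6) * Polynomial.X ^ 30 -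
          Polynomial.C (232 * a ^ 5 * c) * Polynomial.X ^ 25 - Polynomial.C (2 ^ 15 * b) : Polynomial ℚ) ≠ 0 := by
        intro h0
        have := congrArg (fun p => Polynomial.coeff p 30) h0
        simp only [Polynomial.coeff_sub, Polynomial.coeff_C_mul, Polynomial.coeff_X_pow,
          Polynomial.coeff_C, Polynomial.coeff_zero] at this
        norm_num at this
        exact ha this
      refine (Polynomial.finite_setOf_isRoot hp).subset ?_
      rintro u ⟨hu, hZc⟩
      have hu0 : u ≠ 0 := ne_of_gt hu
      have : 7 * a ^ 6 * u ^ 30 - 2 ^ 15 * b = c * (232 * a ^ 5 * u ^ 25) := by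
        have h25 : (232 * a ^ 5 * u ^ 25 : ℚ) ≠ 0 := by positivity
        replace hZc : (7 * a ^ 6 * u ^ 30 - 2 ^ 15 * b) / (232 * a ^ 5 * u ^ 25) = c := hZc
        rw [div_eq_iff h25] at hZc
        linarith [hZc]
      simp only [Set.mem_setOf_eq, Polynomial.IsRoot, Polynomial.eval_sub, Polynomial.eval_mul,
        Polynomial.eval_C, Polynomial.eval_pow, Polynomial.eval_X]
      linarith [this]
    have := (hfin.biUnion hfib).subset hcover
    exact hIoi this
  have := hTinf.mono hTsub
  exact this.of_image _
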